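/- arXiv:2310.00676 — 4 statements merged into one kernel-verified Lean document; each statement's English description precedes it below -/
import Mathlib

section
/- Let $p$ be an odd prime and $i$ a nonzero integer with $(p-1) \mid i$, and write $v = v_p(i)$ for the $p$-adic valuation of $i$. For every integer $n \geq v+2$, the set $\{x \in \mathbf{Z}/p^n\mathbf{Z} : u^i \cdot x = x \text{ for all } u \in (\mathbf{Z}/p^n\mathbf{Z})^\times\}$ equals the subgroup $p^{n-v-1}\,\mathbf{Z}/p^n\mathbf{Z}$ (the set of multiples of $p^{n-v-1}$), and in particular has exactly $p^{v+1}$ elements. -/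
-- Lemma A: lower bound valuation for all a coprime to p
lemma lemA (p : ℕ) (hp : p.Prime) (hodd : Odd p) (j v : ℕ) (hj : j ≠ 0)
    (hdvdj : (p - 1) ∣ j) (hv : v = padicValNat p j) (a : ℤ) (ha : ¬ (p:ℤ) ∣ a) :
    (p:ℤ) ^ (v + 1) ∣ a ^ j - 1 := by
  haveI : Fact p.Prime := ⟨hp⟩
  obtain ⟨m, hm⟩ := hdvdj
  have hp1 : 1 < p := hp.one_lt
  have hm0 : m ≠ 0 := by rintro rfl; simp at hm; omega
  have hvm : (p:ℕ) ^ v ∣ m := by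
    have h1 : padicValNat p (p-1) = 0 :=
      padicValNat.eq_zero_of_not_dvd (fun hd => by
        have := Nat.le_of_dvd (by omega) hd; omega)
    have h2 : padicValNat p j = padicValNat p (p-1) + padicValNat p m := by
      rw [hm, padicValNat.mul (by omega) hm0]
    rw [hv, h2, h1, zero_add]
    exact pow_padicValNat_dvd
  -- Fermat
  have hfer : (p:ℤ) ∣ a ^ (p - 1) - 1 := by
    have hane : (a : ZMod p) ≠ 0 := by
      rwa [Ne, ZMod.intCast_zmod_eq_zero_iff_dvd]
    have := ZMod.pow_card_sub_one_eq_one hane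
    rw [← ZMod.intCast_zmod_eq_zero_iff_dvd]
    push_cast
    rw [this]; ring
  have hnd : ¬ (p:ℤ) ∣ a ^ (p - 1) := fun h => ha ((Nat.prime_iff_prime_int.mp hp).dvd_of_dvd_pow h)
  have key := Int.emultiplicity_pow_sub_pow hp hodd (x := a ^ (p-1)) (y := 1) (by simpa) hnd m
  have h1 : (1 : ℕ∞) ≤ emultiplicity ((p:ℤ)) (a ^ (p-1) - 1) := by
    apply le_emultiplicity_of_pow_dvd; simpa
  have h2 : (v : ℕ∞) ≤ emultiplicity p m := le_emultiplicity_of_pow_dvd hvm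
  apply pow_dvd_of_le_emultiplicity
  have : a ^ j = (a ^ (p-1)) ^ m := by rw [← pow_mul, ← hm]
  rw [this]
  calc ((v + 1 : ℕ) : ℕ∞) = (1 : ℕ∞) + (v : ℕ∞) := by push_cast; ring
    _ ≤ emultiplicity ((p:ℤ)) (a ^ (p-1) - 1) + emultiplicity p m := add_le_add h1 h2
    _ = emultiplicity ((p:ℤ)) ((a ^ (p-1)) ^ m - 1 ^ m) := key.symm
    _ = emultiplicity ((p:ℤ)) ((a ^ (p-1)) ^ m - 1) := by rw [one_pow]

-- Lemma B: exact valuation for a = 1 + p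
lemma lemB (p : ℕ) (hp : p.Prime) (hodd : Odd p) (j v : ℕ) (hj : j ≠ 0)
    (hv : v = padicValNat p j) :
    ∃ c : ℤ, ((1:ℤ) + p) ^ j - 1 = (p:ℤ) ^ (v + 1) * c ∧ ¬ (p:ℤ) ∣ c := by
  haveI : Fact p.Prime := ⟨hp⟩
  have hnd : ¬ (p:ℤ) ∣ 1 + p := by
    intro h
    have h1 : (p:ℤ) ∣ 1 := by
      have := dvd_sub h (dvd_refl (p:ℤ)); simpa using this
    have := Int.le_of_dvd one_pos h1
    have := hp.two_le
    omega
  have key := Int.emultiplicity_pow_sub_pow hp hodd (x := (1:ℤ) + p) (y := 1) (show (p:ℤ) ∣ (1 + p) - 1 by simp) hnd j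
  have h1 : emultiplicity ((p:ℤ)) ((1:ℤ) + p - 1) = 1 := by
    rw [add_sub_cancel_left, show (1 : ℕ∞) = ((1:ℕ) : ℕ∞) from rfl,
      emultiplicity_eq_coe]
    constructor
    · simp
    · intro h
      have hle := Int.le_of_dvd (by exact_mod_cast hp.pos) h
      have h2 : ((p:ℤ)) ^ 2 ≤ (p:ℤ) := by simpa using hle
      have hp2 : (2:ℤ) ≤ p := by exact_mod_cast hp.two_le
      nlinarith
  have h2 : emultiplicity p j = (v : ℕ∞) := by
    rw [hv, padicValNat_eq_emultiplicity hj]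
  rw [one_pow, h1, h2] at key
  have key2 : emultiplicity ((p:ℤ)) (((1:ℤ) + p) ^ j - 1) = ((v + 1 : ℕ) : ℕ∞) := by
    rw [key]; push_cast; ring
  obtain ⟨hdvd2, hndvd⟩ := emultiplicity_eq_coe.mp key2
  obtain ⟨c, hc⟩ := hdvd2
  refine ⟨c, hc, fun hpc => hndvd ?_⟩
  obtain ⟨t, ht⟩ := hpc
  exact ⟨t, by rw [hc, ht]; ring⟩


/-- For `p` an odd prime, `i ≠ 0` with `(p-1) ∣ i`, `v = v_p(i)`, and `n ≥ v + 2`: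
the set of `x ∈ ℤ/pⁿℤ` fixed by multiplication by `u^i` for all units `u` is exactly
the set of multiples of `p^(n-v-1)`, and it has exactly `p^(v+1)` elements. -/
theorem stmt_1 (p : ℕ) (hp : p.Prime) (hodd : Odd p) (i : ℤ) (hi : i ≠ 0)
    (hdvd : ((p : ℤ) - 1) ∣ i) (v : ℕ) (hv : v = padicValInt p i)
    (n : ℕ) (hn : v + 2 ≤ n) :
    {x : ZMod (p ^ n) |
        ∀ u : (ZMod (p ^ n))ˣ, ((u ^ i : (ZMod (p ^ n))ˣ) : ZMod (p ^ n)) * x = x}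
      = {x : ZMod (p ^ n) | ((p : ZMod (p ^ n)) ^ (n - v - 1)) ∣ x} ∧
    Nat.card {x : ZMod (p ^ n) |
        ∀ u : (ZMod (p ^ n))ˣ, ((u ^ i : (ZMod (p ^ n))ˣ) : ZMod (p ^ n)) * x = x}
      = p ^ (v + 1) := by
  haveI : Fact p.Prime := ⟨hp⟩
  haveI : NeZero (p ^ n) := ⟨pow_ne_zero n hp.pos.ne'⟩
  set j : ℕ := i.natAbs with hjdef
  have hj : j ≠ 0 := Int.natAbs_ne_zero.mpr hi
  have hdvdj : (p - 1) ∣ j := by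
    have hcast : ((p:ℤ) - 1) = ((p - 1 : ℕ) : ℤ) := by
      have := hp.one_le; push_cast [this]; ring
    rw [hcast] at hdvd
    simpa [hjdef] using Int.natAbs_dvd_natAbs.mpr hdvd
  have hv' : v = padicValNat p j := hv
  set d : ZMod (p ^ n) := (p : ZMod (p ^ n)) ^ (n - v - 1) with hddef
  have hset : {x : ZMod (p ^ n) |
        ∀ u : (ZMod (p ^ n))ˣ, ((u ^ i : (ZMod (p ^ n))ˣ) : ZMod (p ^ n)) * x = x}
      = {x : ZMod (p ^ n) | d ∣ x} := by
    ext x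
    simp only [Set.mem_setOf_eq]
    constructor
    · intro h
      have hcop : Nat.Coprime (p + 1) (p ^ n) := by
        apply Nat.Coprime.pow_right
        rw [Nat.add_comm]
        exact Nat.coprime_add_self_left.mpr (Nat.coprime_one_left p)
      set u0 : (ZMod (p ^ n))ˣ := ZMod.unitOfCoprime (p + 1) hcop with hu0
      have hu0v : (u0 : ZMod (p ^ n)) = 1 + (p : ZMod (p ^ n)) := by
        rw [hu0, ZMod.coe_unitOfCoprime]; push_cast; ring
      have key : (1 + (p : ZMod (p ^ n))) ^ j * x = x := by
        rw [← hu0v, ← Units.val_pow_eq_pow_val]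
        rcases Int.natAbs_eq i with h1 | h1
        · have h2 := h u0
          rw [h1, zpow_natCast] at h2
          exact h2
        · have h2 := h u0⁻¹
          rw [h1, zpow_neg, zpow_natCast, inv_pow, inv_inv] at h2
          exact h2
      obtain ⟨c, hc, hpc⟩ := lemB p hp hodd j v hj hv'
      set X : ℤ := (x.val : ℤ) with hX
      have hXx : ((X : ZMod (p ^ n)) = x) := by
        simp [hX, ZMod.natCast_val, ZMod.cast_id]
      have hdvdZ : ((p:ℤ) ^ n) ∣ (((1:ℤ) + p) ^ j - 1) * X := by
        have h0 : (((((1:ℤ) + p) ^ j - 1) * X : ℤ) : ZMod (p ^ n)) = 0 := by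
          push_cast
          rw [hXx]
          linear_combination key
        rw [ZMod.intCast_zmod_eq_zero_iff_dvd] at h0
        exact_mod_cast h0
      rw [hc] at hdvdZ
      have hfac : ((p:ℤ)) ^ n = (p:ℤ) ^ (v + 1) * (p:ℤ) ^ (n - v - 1) := by
        rw [← pow_add]; congr 1; omega
      rw [hfac, mul_assoc] at hdvdZ
      have hpne : ((p:ℤ)) ^ (v + 1) ≠ 0 := by
        apply pow_ne_zero; exact_mod_cast hp.pos.ne'
      have h2 : (p:ℤ) ^ (n - v - 1) ∣ c * X :=
        (mul_dvd_mul_iff_left hpne).mp hdvdZ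
      have hcop2 : IsCoprime ((p:ℤ) ^ (n - v - 1)) c :=
        (((Nat.prime_iff_prime_int.mp hp).coprime_iff_not_dvd).mpr hpc).pow_left
      obtain ⟨t, ht⟩ : (p:ℤ) ^ (n - v - 1) ∣ X := hcop2.dvd_of_dvd_mul_left h2
      refine ⟨((t : ℤ) : ZMod (p ^ n)), ?_⟩
      rw [← hXx, ht, hddef]
      push_cast
      ring
    · intro hx u
      obtain ⟨c, hc⟩ := hx
      have claim : ∀ w : (ZMod (p ^ n))ˣ, ((w : ZMod (p ^ n))) ^ j * x = x := by
        intro w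
        set a : ℤ := (((w : ZMod (p ^ n)).val : ℕ) : ℤ) with ha
        have haw : ((a : ZMod (p ^ n)) = (w : ZMod (p ^ n))) := by
          simp [ha, ZMod.natCast_val, ZMod.cast_id]
        have hpa : ¬ (p:ℤ) ∣ a := by
          rw [ha, Int.natCast_dvd_natCast]
          intro hd
          have hcopu := ZMod.val_coe_unit_coprime w
          have hpn : p ∣ p ^ n := dvd_pow_self p (by omega)
          have h1 : p ∣ 1 := hcopu ▸ Nat.dvd_gcd hd hpn
          have := Nat.le_of_dvd one_pos h1
          have := hp.two_le
          omega
        obtain ⟨t, ht⟩ : (p:ℤ) ^ (v + 1) ∣ a ^ j - 1 :=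
          lemA p hp hodd j v hj hdvdj hv' a hpa
        have hcast : ((w : ZMod (p ^ n))) ^ j - 1 =
            ((p : ZMod (p ^ n)) ^ (v + 1)) * ((t : ℤ) : ZMod (p ^ n)) := by
          have h3 := congrArg (fun z : ℤ => ((z : ZMod (p ^ n)))) ht
          push_cast at h3
          rw [haw] at h3
          simpa using h3
        have hzero : (p : ZMod (p ^ n)) ^ (v + 1) * d = 0 := by
          rw [hddef, ← pow_add]
          have he : v + 1 + (n - v - 1) = n := by omega
          rw [he]
          have h4 : ((p : ZMod (p ^ n)) ^ n) = ((p ^ n : ℕ) : ZMod (p ^ n)) := by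
            push_cast; rfl
          rw [h4, ZMod.natCast_self]
        have h5 : ((w : ZMod (p ^ n))) ^ j * x - x = 0 := by
          calc ((w : ZMod (p ^ n))) ^ j * x - x
              = (((w : ZMod (p ^ n))) ^ j - 1) * x := by ring
            _ = ((p : ZMod (p ^ n)) ^ (v + 1)) * ((t : ℤ) : ZMod (p ^ n)) * (d * c) := by
                rw [hcast, hc]
            _ = ((p : ZMod (p ^ n)) ^ (v + 1) * d) * (((t : ℤ) : ZMod (p ^ n)) * c) := by
                ring
            _ = 0 := by rw [hzero, zero_mul]
        linear_combination h5
      rcases Int.natAbs_eq i with h1 | h1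
      · rw [h1, zpow_natCast, Units.val_pow_eq_pow_val]
        exact claim u
      · rw [h1, zpow_neg, zpow_natCast, Units.inv_mul_eq_iff_eq_mul,
          Units.val_pow_eq_pow_val]
        exact (claim u).symm
  refine ⟨hset, ?_⟩
  rw [hset]
  -- count the multiples of d
  have hset2 : {x : ZMod (p ^ n) | d ∣ x}
      = (AddSubgroup.zmultiples d : Set (ZMod (p ^ n))) := by
    ext x
    simp only [Set.mem_setOf_eq, SetLike.mem_coe, AddSubgroup.mem_zmultiples_iff]
    constructor
    · rintro ⟨c, rfl⟩
      obtain ⟨z, rfl⟩ := ZMod.intCast_surjective c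
      exact ⟨z, by rw [zsmul_eq_mul]; ring⟩
    · rintro ⟨z, rfl⟩
      exact ⟨(z : ZMod (p ^ n)), by rw [zsmul_eq_mul]; ring⟩
  rw [hset2]
  have h6 : Nat.card ((AddSubgroup.zmultiples d : Set (ZMod (p ^ n))))
      = Nat.card (AddSubgroup.zmultiples d) := rfl
  rw [h6, Nat.card_zmultiples]
  have hd2 : d = ((p ^ (n - v - 1) : ℕ) : ZMod (p ^ n)) := by
    rw [hddef]; push_cast; rfl
  rw [hd2, ZMod.addOrderOf_coe _ (NeZero.ne (p ^ n))]
  have hg : (p ^ n).gcd (p ^ (n - v - 1)) = p ^ (n - v - 1) :=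
    Nat.gcd_eq_right (pow_dvd_pow p (by omega))
  rw [hg, Nat.pow_div (by omega) hp.pos]
  congr 1
  omega
end

section
/- Let $p$ be a prime, $n \geq 1$ an integer, $R = (\mathbf{Z}/p^n\mathbf{Z})[X]$, and let $g \in R$ be a monic polynomial whose reduction modulo $p$ is irreducible in $\mathbf{F}_p[X]$. Consider the localization $R[1/g]$ of $R$ away from $g$ and the quotient $R$-module $E = R[1/g]/R$ (the cokernel of the localization map $R \to R[1/g]$). Then $E$ is an injective $R$-module, and every element of $E$ is annihilated by a positive power of $g$. -/
open Polynomial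

universe u v

section Stmt12Helpers


lemma zmod_exists_mul_eq {m : ℕ} [NeZero m] (d c : ZMod m)
    (hc : ∀ r : ZMod m, r * d = 0 → r * c = 0) : ∃ e : ZMod m, d * e = c := by
  have hm : 0 < m := Nat.pos_of_ne_zero (NeZero.ne m)
  set D := d.val with hD
  set G := Nat.gcd D m with hG
  have hGm : G ∣ m := Nat.gcd_dvd_right D m
  have hGpos : 0 < G := Nat.gcd_pos_of_pos_right _ hm
  have hq : 0 < m / G := Nat.div_pos (Nat.le_of_dvd hm hGm) hGpos
  have h1 : ((m / G : ℕ) : ZMod m) * d = 0 := by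
    have h0 : (((m / G) * D : ℕ) : ZMod m) = 0 := by
      rw [ZMod.natCast_eq_zero_iff]
      exact dvd_trans (by rw [Nat.div_mul_cancel hGm]) (Nat.mul_dvd_mul_left _ (Nat.gcd_dvd_left D m))
    rw [Nat.cast_mul] at h0
    rwa [show ((D : ℕ) : ZMod m) = d by rw [hD, ZMod.natCast_val, ZMod.cast_id]] at h0
  have h2 : ((m / G : ℕ) : ZMod m) * c = 0 := hc _ h1
  have h3 : m ∣ (m / G) * c.val := by
    have h0 : (((m / G) * c.val : ℕ) : ZMod m) = 0 := by
      rw [Nat.cast_mul, show ((c.val : ℕ) : ZMod m) = c by rw [ZMod.natCast_val, ZMod.cast_id]]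
      exact h2
    rwa [ZMod.natCast_eq_zero_iff] at h0
  have h4 : G ∣ c.val := by
    rcases h3 with ⟨t, ht⟩
    refine ⟨t, Nat.eq_of_mul_eq_mul_left hq ?_⟩
    rw [ht, ← Nat.mul_assoc, Nat.div_mul_cancel hGm]
  have hbez : ∃ a : ZMod m, ((G : ℕ) : ZMod m) = d * a := by
    refine ⟨(((D : ℤ).gcdA m : ℤ) : ZMod m), ?_⟩
    have h5 := congrArg (fun z : ℤ => ((z : ZMod m))) (Int.gcd_eq_gcd_ab (D : ℤ) (m : ℤ))
    simp only [Int.gcd_natCast_natCast] at h5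
    push_cast at h5
    rw [ZMod.natCast_self, zero_mul, add_zero] at h5
    rw [show ((D : ℕ) : ZMod m) = d by rw [hD, ZMod.natCast_val, ZMod.cast_id]] at h5
    exact h5
  rcases h4 with ⟨t, ht⟩
  rcases hbez with ⟨a, ha⟩
  refine ⟨a * (t : ℕ), ?_⟩
  have hcc : c = ((c.val : ℕ) : ZMod m) := by rw [ZMod.natCast_val, ZMod.cast_id]
  rw [hcc, ht, Nat.cast_mul, ← mul_assoc, ← ha]



lemma ext_of_ker_le {A : Type u} [Ring A] {X Y Q : Type v}
    [AddCommGroup X] [AddCommGroup Y] [AddCommGroup Q]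
    [Module A X] [Module A Y] [Module A Q] (hQ : Module.Injective A Q)
    (f : X →ₗ[A] Y) (g : X →ₗ[A] Q) (hle : LinearMap.ker f ≤ LinearMap.ker g) :
    ∃ h : Y →ₗ[A] Q, ∀ x, h (f x) = g x := by
  have h1 : Function.Injective ((LinearMap.ker f).liftQ f le_rfl) := by
    rw [← LinearMap.ker_eq_bot]
    exact Submodule.ker_liftQ_eq_bot _ _ _ le_rfl
  obtain ⟨h, hh⟩ := hQ.out ((LinearMap.ker f).liftQ f le_rfl) h1 ((LinearMap.ker f).liftQ g hle)
  refine ⟨h, fun x => ?_⟩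
  have := hh (Submodule.Quotient.mk x)
  rwa [Submodule.liftQ_apply, Submodule.liftQ_apply] at this


lemma zmod_baer (m : ℕ) [NeZero m] : Module.Baer (ZMod m) (ZMod m) := by
  intro I f
  obtain ⟨z, hz⟩ : ∃ z : ℤ, Ideal.comap (Int.castRingHom (ZMod m)) I = Ideal.span {z} :=
    (Ideal.comap (Int.castRingHom (ZMod m)) I).isPrincipal_iff.mp inferInstance
  have hI : I = Ideal.span {((z : ℤ) : ZMod m)} := by
    conv_lhs => rw [← Ideal.map_comap_of_surjective (Int.castRingHom (ZMod m))
      ZMod.intCast_surjective I]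
    rw [hz, Ideal.map_span]
    simp
  have hdI : ((z : ℤ) : ZMod m) ∈ I := by rw [hI]; exact Ideal.subset_span rfl
  set d : ZMod m := ((z : ℤ) : ZMod m) with hd
  set c : ZMod m := f ⟨d, hdI⟩ with hc
  obtain ⟨e, he⟩ : ∃ e, d * e = c := by
    apply zmod_exists_mul_eq
    intro r hr
    have h0 : r • (⟨d, hdI⟩ : I) = (0 : I) := by
      ext
      simpa [smul_eq_mul] using hr
    calc r * c = r • c := by rw [smul_eq_mul]
    _ = f (r • ⟨d, hdI⟩) := by rw [map_smul]
    _ = 0 := by rw [h0, map_zero]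
  refine ⟨LinearMap.toSpanSingleton (ZMod m) (ZMod m) e, fun x hx => ?_⟩
  have hx' : x ∈ Ideal.span {d} := hI ▸ hx
  rcases Ideal.mem_span_singleton'.mp hx' with ⟨a, ha⟩
  have h2 : (⟨x, hx⟩ : I) = a • ⟨d, hdI⟩ := by
    ext; simpa [smul_eq_mul] using ha.symm
  rw [h2, map_smul, ← hc, LinearMap.toSpanSingleton_apply, smul_eq_mul, smul_eq_mul, ← he, ← ha]
  ring


variable {A : Type} [CommRing A]

/-- `A[X]⧸(h)` with `h` monic is an adjoin-root. -/
noncomputable def quotIsAdjoinRootMonic (h : A[X]) (hm : h.Monic) :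
    IsAdjoinRootMonic (A[X] ⧸ Ideal.span {h}) h where
  map := Ideal.Quotient.mkₐ A _
  map_surjective := Ideal.Quotient.mkₐ_surjective A _
  ker_map := Ideal.Quotient.mkₐ_ker A _
  monic := hm

/-- Perfect pairing on `A[X]⧸(h)` for `h` monic of positive degree. -/
lemma exists_pairing (h : A[X]) (hm : h.Monic) (hd : 1 ≤ h.natDegree) :
    ∃ (lam : (A[X] ⧸ Ideal.span {h}) →ₗ[A] A)
      (ep : (A[X] ⧸ Ideal.span {h}) ≃ₗ[A] ((A[X] ⧸ Ideal.span {h}) →ₗ[A] A)),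
      ∀ b c, ep b c = lam (b * c) := by
  classical
  set B := A[X] ⧸ Ideal.span {h} with hB
  set iar := quotIsAdjoinRootMonic h hm with hiar
  set d := h.natDegree with hdd
  set bas : Module.Basis (Fin d) A B := iar.basis with hbas
  set last : Fin d := ⟨d - 1, by omega⟩ with hlast
  set lam : B →ₗ[A] A := bas.coord last with hlam
  -- values of lam on powers of the root
  have hlow : ∀ k : ℕ, k < d → lam (iar.root ^ k) = if k = d - 1 then 1 else 0 := by
    intro k hk
    have : iar.root ^ k = bas ⟨k, hk⟩ := (iar.basis_apply ⟨k, hk⟩).symm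
    rw [this, hlam, Module.Basis.coord_apply, Module.Basis.repr_self, Finsupp.single_apply]
    have : (⟨k, hk⟩ : Fin d) = last ↔ k = d - 1 := by
      constructor
      · intro he; simpa [hlast] using congrArg Fin.val he
      · intro he; ext; simpa [hlast]
    split_ifs with h1 h2 h2
    · rfl
    · exact absurd (this.mp h1) h2
    · exact absurd (this.mpr h2) h1
    · rfl
  set Phi : B →ₗ[A] Module.Dual A B :=
    (LinearMap.llcomp A B B A lam) ∘ₗ (LinearMap.mul A B) with hPhi
  have hPhi_apply : ∀ b c : B, Phi b c = lam (b * c) := fun b c => rfl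
  -- matrix of Phi
  set Mm := LinearMap.toMatrix bas bas.dualBasis Phi with hMm
  have hMm_apply : ∀ i j, Mm i j = lam (iar.root ^ ((j : ℕ) + (i : ℕ))) := by
    intro i j
    rw [hMm, LinearMap.toMatrix_apply, Module.Basis.dualBasis_repr, hPhi_apply, hbas,
      iar.basis_apply, iar.basis_apply, ← pow_add]
  have hdet : IsUnit Mm.det := by
    set Nn := Mm.submatrix id (Fin.revPerm : Equiv.Perm (Fin d)) with hNn
    have hrev : ∀ j : Fin d, ((Fin.revPerm j : Fin d) : ℕ) = d - (j + 1) := by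
      intro j; simp [Fin.val_rev]
    have hNd : Nn.det = 1 := by
      have htri : Nn.BlockTriangular OrderDual.toDual := by
        intro i j hij
        have hij' : (i : ℕ) < (j : ℕ) := hij
        have hj := j.isLt
        rw [hNn, Matrix.submatrix_apply, id_eq, hMm_apply]
        have hne : ((Fin.revPerm j : Fin d) : ℕ) + (i : ℕ) ≠ d - 1 := by
          have := hrev j; omega
        have hlt : ((Fin.revPerm j : Fin d) : ℕ) + (i : ℕ) < d := by
          have := hrev j; omega
        rw [hlow _ hlt, if_neg hne]
      rw [Matrix.det_of_lowerTriangular Nn htri]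
      have hdiag : ∀ i : Fin d, Nn i i = 1 := by
        intro i
        have hi := i.isLt
        rw [hNn, Matrix.submatrix_apply, id_eq, hMm_apply]
        have h1 : ((Fin.revPerm i : Fin d) : ℕ) + (i : ℕ) = d - 1 := by
          have := hrev i; omega
        rw [h1, hlow _ (by omega), if_pos rfl]
      rw [Finset.prod_congr rfl (fun i _ => hdiag i), Finset.prod_const_one]
    have hperm : Nn.det = (Equiv.Perm.sign (Fin.revPerm : Equiv.Perm (Fin d)) : ℤ) * Mm.det :=
      Matrix.det_permute' _ _
    rw [hNd] at hperm
    rcases Int.units_eq_one_or (Equiv.Perm.sign (Fin.revPerm : Equiv.Perm (Fin d))) with hs | hs <;>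
        rw [hs] at hperm <;> simp at hperm
    · rw [← hperm]; exact isUnit_one
    · have : Mm.det = -1 := by rw [eq_comm, neg_eq_iff_eq_neg] at hperm; rw [hperm]
      rw [this]; exact isUnit_one.neg
  exact ⟨lam, LinearEquiv.ofIsUnitDet hdet, fun b c => by
    rw [LinearEquiv.ofIsUnitDet_apply]; rfl⟩

end Stmt12Helpers

set_option maxHeartbeats 1000000 in
lemma main_aux {A : Type} [CommRing A] [IsNoetherianRing A]
    (hinjA : Module.Injective A A)
    (g : A[X]) (hg : g.Monic) (hgd : 1 ≤ g.natDegree) :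
    Module.Injective A[X]
      ((Localization.Away g) ⧸
        (LinearMap.range (Algebra.linearMap A[X] (Localization.Away g)))) ∧
    ∀ x : (Localization.Away g) ⧸
        (LinearMap.range (Algebra.linearMap A[X] (Localization.Away g))),
      ∃ k : ℕ, 0 < k ∧ g ^ k • x = 0 := by
  set rng := LinearMap.range (Algebra.linearMap A[X] (Localization.Away g)) with hrng
  have hgm : ∀ u : ℕ, g ^ u ∈ Submonoid.powers g := fun u =>
    Submonoid.mem_powers_iff _ _ |>.mpr ⟨u, rfl⟩
  -- torsion
  have htor : ∀ x : (Localization.Away g) ⧸ rng, ∃ k : ℕ, g ^ k • x = 0 := by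
    intro x
    obtain ⟨y, rfl⟩ := Submodule.Quotient.mk_surjective rng x
    refine Localization.induction_on y ?_
    rintro ⟨r, s⟩
    obtain ⟨k, hk⟩ := (Submonoid.mem_powers_iff (s : A[X]) g).mp s.2
    refine ⟨k, ?_⟩
    rw [← Submodule.Quotient.mk_smul, Submodule.Quotient.mk_eq_zero]
    rw [Localization.smul_mk, smul_eq_mul]
    have heq : Localization.mk (g ^ k * r) s = Localization.mk r 1 := by
      rw [Localization.mk_eq_mk_iff, Localization.r_iff_exists]
      exact ⟨1, by simp [hk, mul_comm]⟩
    rw [heq, Localization.mk_one_eq_algebraMap]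
    exact ⟨r, rfl⟩
  -- cancellation in the localization
  have hkey : ∀ (a b : A[X]) (u : ℕ),
      Localization.mk a ⟨g ^ u, hgm u⟩ = Localization.mk b 1 → a = g ^ u * b := by
    intro a b u hab
    rw [Localization.mk_eq_mk_iff, Localization.r_iff_exists] at hab
    obtain ⟨c, hc⟩ := hab
    obtain ⟨ee, hee⟩ := (Submonoid.mem_powers_iff (c : A[X]) g).mp c.2
    have hreg := ((hg.pow ee).isRegular).left
    apply hreg
    simp only [OneMemClass.coe_one, one_mul] at hc
    rw [← hee] at hc
    simpa [mul_comm, mul_assoc, mul_left_comm] using hc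
  refine ⟨?_, fun x => ?_⟩
  swap
  · obtain ⟨k, hk⟩ := htor x
    exact ⟨k + 1, Nat.succ_pos k, by rw [pow_succ, mul_comm, mul_smul, hk, smul_zero]⟩
  -- Baer criterion
  apply Module.Baer.injective
  intro I f
  -- step 1 : a uniform annihilating power on `I`
  have hNex : ∃ N : ℕ, ∀ x : ↥I, g ^ N • f x = 0 := by
    obtain ⟨s, hs⟩ := IsNoetherian.noetherian I
    have hmem : ∀ a ∈ s, a ∈ I := fun a ha => hs ▸ Submodule.subset_span ha
    have hchoice : ∀ a : {x // x ∈ s}, ∃ kk : ℕ, g ^ kk • f ⟨a.1, hmem a.1 a.2⟩ = 0 :=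
      fun a => htor _
    choose kf hkf using hchoice
    set N := Finset.univ.sup fun a : {x // x ∈ s} => kf a with hN
    refine ⟨N, fun x => ?_⟩
    have hgen : ∀ a : {x // x ∈ s}, g ^ N • f ⟨a.1, hmem a.1 a.2⟩ = 0 := by
      intro a
      have hle : kf a ≤ N := Finset.le_sup (Finset.mem_univ a)
      calc g ^ N • f ⟨a.1, hmem a.1 a.2⟩
          = g ^ (N - kf a) • g ^ kf a • f ⟨a.1, hmem a.1 a.2⟩ := by
            rw [smul_smul, ← pow_add, Nat.sub_add_cancel hle]
      _ = 0 := by rw [hkf, smul_zero]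
    have hsub : I ≤ Submodule.map I.subtype (LinearMap.ker (g ^ N • f)) := by
      conv_lhs => rw [← hs]
      apply Submodule.span_le.mpr
      intro a ha
      exact ⟨⟨a, hmem a ha⟩, by simpa using hgen ⟨a, ha⟩, rfl⟩
    obtain ⟨y, hy1, hy2⟩ := hsub x.2
    have : y = x := Subtype.ext hy2
    rw [← this]
    simpa using hy1
  obtain ⟨N, hNall⟩ := hNex
  -- step 2 : Artin–Rees
  obtain ⟨kAR, hAR⟩ := Ideal.exists_pow_inf_eq_pow_smul (Ideal.span {g}) (I : Submodule A[X] A[X])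
  set M := N + kAR + 1 with hM
  have hARM := hAR M (by omega)
  have hvanish : ∀ x : ↥I, (x : A[X]) ∈ Ideal.span {g ^ M} → f x = 0 := by
    have hstep : Ideal.span {g} ^ (M - kAR) • (I : Submodule A[X] A[X]) ≤
        Submodule.map I.subtype (LinearMap.ker f) := by
      apply Submodule.smul_le.mpr
      intro r hr a ha
      rw [Ideal.span_singleton_pow] at hr
      obtain ⟨t, ht⟩ := Ideal.mem_span_singleton'.mp hr
      have hra : r • a ∈ I := I.smul_mem r ha
      refine ⟨⟨r • a, hra⟩, ?_, rfl⟩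
      simp only [SetLike.mem_coe, LinearMap.mem_ker]
      have hx : (⟨r • a, hra⟩ : ↥I) = r • ⟨a, ha⟩ := rfl
      have hMk : M - kAR = N + 1 := by omega
      rw [hx, map_smul, ← ht, hMk]
      calc (t * g ^ (N + 1)) • f ⟨a, ha⟩
          = (t * g) • g ^ N • f ⟨a, ha⟩ := by
            rw [smul_smul, mul_assoc, ← pow_succ']
      _ = 0 := by rw [hNall, smul_zero]
    intro x hx
    have hx1 : (x : A[X]) ∈ Ideal.span {g} ^ M • (⊤ : Submodule A[X] A[X]) ⊓ I := by
      constructor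
      · rw [smul_eq_mul, Ideal.mul_top, Ideal.span_singleton_pow]
        exact hx
      · exact x.2
    rw [hARM] at hx1
    have hx2 : (x : A[X]) ∈ Ideal.span {g} ^ (M - kAR) • (I : Submodule A[X] A[X]) := by
      refine (smul_mono_right (Ideal.span {g} ^ (M - kAR)) ?_ :
        _ ≤ Ideal.span {g} ^ (M - kAR) • (I : Submodule A[X] A[X])) hx1
      exact inf_le_right
    obtain ⟨y, hy1, hy2⟩ := hstep hx2
    have : y = x := Subtype.ext hy2
    rw [← this]
    exact hy1
  -- step 3 : the annihilator module B and the map ρ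
  have hMone : 1 ≤ M := by omega
  set J := Ideal.span {g ^ M} with hJ
  set u0 : Localization.Away g := Localization.mk 1 ⟨g ^ M, hgm M⟩ with hu0
  set ρ : A[X] →ₗ[A[X]] (Localization.Away g ⧸ rng) :=
    rng.mkQ ∘ₗ LinearMap.toSpanSingleton A[X] (Localization.Away g) u0 with hρ
  have hρ_apply : ∀ r : A[X],
      ρ r = Submodule.Quotient.mk (Localization.mk r ⟨g ^ M, hgm M⟩) := by
    intro r
    rw [hρ]
    simp only [LinearMap.coe_comp, Function.comp_apply, LinearMap.toSpanSingleton_apply]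
    rw [hu0, Localization.smul_mk, smul_eq_mul, mul_one]
    rfl
  have hJker : J = LinearMap.ker ρ := by
    ext r
    rw [LinearMap.mem_ker, hρ_apply, Submodule.Quotient.mk_eq_zero]
    constructor
    · intro hr
      obtain ⟨t, ht⟩ := Ideal.mem_span_singleton'.mp hr
      have heq : Localization.mk r ⟨g ^ M, hgm M⟩ = Localization.mk t 1 := by
        rw [Localization.mk_eq_mk_iff, Localization.r_iff_exists]
        refine ⟨1, ?_⟩
        simp only [OneMemClass.coe_one, one_mul]
        rw [← ht]
        ring
      rw [heq, Localization.mk_one_eq_algebraMap]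
      exact ⟨t, rfl⟩
    · rintro ⟨t, ht⟩
      have heq : Localization.mk r ⟨g ^ M, hgm M⟩ = Localization.mk t 1 := by
        rw [Localization.mk_one_eq_algebraMap]
        exact ht.symm
      have := hkey r t M heq
      exact Ideal.mem_span_singleton'.mpr ⟨t, by rw [mul_comm, ← this]⟩
  have hrange : ∀ x : Localization.Away g ⧸ rng, g ^ M • x = 0 → ∃ t, ρ t = x := by
    intro x
    obtain ⟨y, rfl⟩ := Submodule.Quotient.mk_surjective rng x
    refine Localization.induction_on y ?_
    rintro ⟨r, s⟩ hx0
    obtain ⟨k, hk⟩ := (Submonoid.mem_powers_iff (s : A[X]) g).mp s.2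
    rw [← Submodule.Quotient.mk_smul, Submodule.Quotient.mk_eq_zero] at hx0
    rw [Localization.smul_mk, smul_eq_mul] at hx0
    obtain ⟨t, ht⟩ := hx0
    have heq : Localization.mk (g ^ M * r) s = Localization.mk t 1 := by
      rw [Localization.mk_one_eq_algebraMap]
      exact ht.symm
    have hs' : s = (⟨g ^ k, hgm k⟩ : Submonoid.powers g) := Subtype.ext hk.symm
    rw [hs'] at heq
    have hc := hkey (g ^ M * r) t k heq
    refine ⟨t, ?_⟩
    rw [hρ_apply]
    congr 1
    rw [Localization.mk_eq_mk_iff, Localization.r_iff_exists]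
    refine ⟨1, ?_⟩
    simp only [hs', OneMemClass.coe_one, one_mul]
    exact hc.symm

  -- step 4 : duality over A
  have hMdeg : 1 ≤ (g ^ M).natDegree := by
    rw [hg.natDegree_pow]
    exact Nat.mul_pos (by omega) hgd
  obtain ⟨lam, ep, hep⟩ := exists_pairing (g ^ M) (hg.pow M) hMdeg
  have hJle : Ideal.span {g ^ M} ≤ LinearMap.ker ρ := le_of_eq (hJ ▸ hJker)
  set ρbar : (A[X] ⧸ Ideal.span {g ^ M}) →ₗ[A[X]] (Localization.Away g ⧸ rng) :=
    Submodule.liftQ (Ideal.span {g ^ M}) ρ hJle with hρbar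
  have hρbar_mk : ∀ r : A[X], ρbar (Ideal.Quotient.mk _ r) = ρ r := fun r =>
    Submodule.liftQ_apply _ ρ r
  have hbarinj : Function.Injective ρbar := by
    rw [← LinearMap.ker_eq_bot]
    exact Submodule.ker_liftQ_eq_bot _ _ _ (le_of_eq (hJ ▸ hJker).symm)
  have hmemrange : ∀ x : ↥I, f x ∈ LinearMap.range ρbar := by
    intro x
    have h0 : g ^ M • f x = 0 := by
      have hMN : M = (M - N) + N := by omega
      rw [hMN, pow_add, mul_smul, hNall, smul_zero]
    obtain ⟨t, ht⟩ := hrange (f x) h0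
    exact ⟨Ideal.Quotient.mk _ t, by rw [hρbar_mk]; exact ht⟩
  set φ : ↥I →ₗ[A[X]] (A[X] ⧸ Ideal.span {g ^ M}) :=
    (LinearEquiv.ofInjective ρbar hbarinj).symm.toLinearMap ∘ₗ
      (LinearMap.codRestrict (LinearMap.range ρbar) f hmemrange) with hφ
  have hφcomp : ∀ x : ↥I, ρbar (φ x) = f x := by
    intro x
    have h1 : (LinearEquiv.ofInjective ρbar hbarinj) (φ x) =
        (⟨f x, hmemrange x⟩ : ↥(LinearMap.range ρbar)) :=
      LinearEquiv.apply_symm_apply (LinearEquiv.ofInjective ρbar hbarinj) ⟨f x, hmemrange x⟩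
    have h2 := congrArg Subtype.val h1
    rwa [LinearEquiv.ofInjective_apply] at h2
  have hφvanish : ∀ x : ↥I, (x : A[X]) ∈ Ideal.span {g ^ M} → φ x = 0 := by
    intro x hx
    apply hbarinj
    rw [hφcomp, map_zero, hvanish x hx]
  have hmulsmul : ∀ (r : A[X]) (z : A[X] ⧸ Ideal.span {g ^ M}),
      (Ideal.Quotient.mk (Ideal.span {g ^ M}) r) * z = r • z := by
    intro r z
    obtain ⟨s, rfl⟩ := Ideal.Quotient.mk_surjective z
    rw [← map_mul, ← smul_eq_mul]
    exact (Submodule.Quotient.mk_smul (Ideal.span {g ^ M}) r s).symm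
  set tmap : ↥I →ₗ[A] (A[X] ⧸ Ideal.span {g ^ M}) :=
    (((Ideal.span {g ^ M}).mkQ ∘ₗ I.subtype).restrictScalars A) with htmap
  have htmap_apply : ∀ x : ↥I,
      tmap x = Ideal.Quotient.mk (Ideal.span {g ^ M}) (x : A[X]) := fun x => rfl
  set μ : ↥I →ₗ[A] A := lam ∘ₗ (φ.restrictScalars A) with hμ
  have hμ_apply : ∀ x : ↥I, μ x = lam (φ x) := fun x => rfl
  have hle : LinearMap.ker tmap ≤ LinearMap.ker μ := by
    intro x hx
    rw [LinearMap.mem_ker] at hx ⊢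
    have hxJ : (x : A[X]) ∈ Ideal.span {g ^ M} := by
      rw [htmap_apply] at hx
      rwa [← Submodule.Quotient.mk_eq_zero]
    rw [hμ_apply, hφvanish x hxJ, map_zero]
  obtain ⟨G, hG⟩ := ext_of_ker_le hinjA tmap μ hle
  set eB := ep.symm G with heB
  have hsol : ∀ x : ↥I, φ x = (x : A[X]) • eB := by
    intro x
    apply ep.injective
    apply LinearMap.ext
    intro c
    obtain ⟨r, rfl⟩ := Ideal.Quotient.mk_surjective c
    rw [hep, hep]
    have l1 : φ x * Ideal.Quotient.mk (Ideal.span {g ^ M}) r = φ (r • x) := by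
      rw [mul_comm, hmulsmul, ← map_smul]
    have r2 : ((x : A[X]) • eB) * Ideal.Quotient.mk (Ideal.span {g ^ M}) r =
        eB * Ideal.Quotient.mk (Ideal.span {g ^ M}) (r * (x : A[X])) := by
      rw [← hmulsmul (x : A[X]) eB, map_mul]
      ring
    rw [l1, r2]
    have r3 : lam (eB * Ideal.Quotient.mk (Ideal.span {g ^ M}) (r * (x : A[X]))) =
        G (Ideal.Quotient.mk (Ideal.span {g ^ M}) (r * (x : A[X]))) := by
      rw [← hep, heB, LinearEquiv.apply_symm_apply]
    rw [r3]
    have l3 : lam (φ (r • x)) = G (tmap (r • x)) := by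
      rw [← hμ_apply, ← hG]
    rw [l3, htmap_apply]
    rfl
  refine ⟨LinearMap.toSpanSingleton A[X] _ (ρbar eB), fun x hx => ?_⟩
  rw [LinearMap.toSpanSingleton_apply]
  calc x • ρbar eB = ρbar (x • eB) := (map_smul ρbar x eB).symm
  _ = ρbar (φ ⟨x, hx⟩) := by rw [hsol]
  _ = f ⟨x, hx⟩ := hφcomp _

/-- For `R = (ℤ/pⁿℤ)[X]` and a monic polynomial `g` whose reduction mod `p` is
irreducible, the `R`-module `E = R[1/g]/R` is injective, and every element of `E`
is annihilated by a positive power of `g`. -/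
theorem stmt_12 (p n : ℕ) (hp : p.Prime) (hn : 1 ≤ n)
    (g : Polynomial (ZMod (p ^ n))) (hg : g.Monic)
    (hirr : Irreducible
      (g.map (ZMod.castHom (dvd_pow_self p (Nat.one_le_iff_ne_zero.mp hn)) (ZMod p)))) :
    Module.Injective (Polynomial (ZMod (p ^ n)))
      ((Localization.Away g) ⧸
        (LinearMap.range
          (Algebra.linearMap (Polynomial (ZMod (p ^ n))) (Localization.Away g)))) ∧
    ∀ x : (Localization.Away g) ⧸
        (LinearMap.range
          (Algebra.linearMap (Polynomial (ZMod (p ^ n))) (Localization.Away g))),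
      ∃ k : ℕ, 0 < k ∧ g ^ k • x = 0 := by
  haveI : NeZero (p ^ n) := ⟨pow_ne_zero n hp.pos.ne'⟩
  haveI : IsNoetherianRing (ZMod (p ^ n)) :=
    isNoetherianRing_of_surjective ℤ (ZMod (p ^ n)) (Int.castRingHom (ZMod (p ^ n)))
      ZMod.intCast_surjective
  have hgd : 1 ≤ g.natDegree := by
    by_contra hcon
    push_neg at hcon
    have hdeg : g.natDegree = 0 := by omega
    have h1 : g = 1 := (hg.natDegree_eq_zero).mp hdeg
    rw [h1, Polynomial.map_one] at hirr
    exact not_irreducible_one hirr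
  exact main_aux ((zmod_baer (p ^ n)).injective) g hg hgd
end

section
/- Let $p$ be a prime, $n \geq 1$ an integer, $R = (\mathbf{Z}/p^n\mathbf{Z})[X]$, and let $S \subseteq R$ be the multiplicative set of monic polynomials. Then the localization $S^{-1}R$, regarded as an $R$-module, is an injective $R$-module, and the localization map $R \to S^{-1}R$ is injective. -/
/-- The multiplicative submonoid of monic polynomials over a commutative ring. -/
def monicSubmonoid (R : Type*) [CommRing R] : Submonoid (Polynomial R) where
  carrier := {f | f.Monic}
  mul_mem' := fun ha hb => Polynomial.Monic.mul ha hb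
  one_mem' := Polynomial.monic_one

set_option linter.unusedSectionVars false
set_option maxHeartbeats 1000000

namespace Stmt13Aux

open Polynomial nonZeroDivisors

variable {p n : ℕ} (hp : p.Prime) (hn : n ≠ 0)

local notation "A" => ZMod (p ^ n)
local notation "R" => Polynomial (ZMod (p ^ n))
local notation "T" => Localization (monicSubmonoid (ZMod (p ^ n)))

lemma monic_le_nzd : monicSubmonoid (ZMod (p ^ n)) ≤ (Polynomial (ZMod (p ^ n)))⁰ :=
  fun _ hf => Polynomial.Monic.mem_nonZeroDivisors hf

include hp hn

lemma isUnit_of_castHom_ne_zero (a : A)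
    (h : ZMod.castHom (dvd_pow_self p hn) (ZMod p) a ≠ 0) : IsUnit a := by
  haveI : NeZero (p ^ n) := ⟨pow_ne_zero _ hp.ne_zero⟩
  have h1 : ¬ (p ∣ a.val) := by
    intro hd
    apply h
    rw [ZMod.castHom_apply, ZMod.cast_eq_val]
    exact (ZMod.natCast_eq_zero_iff _ _).mpr hd
  have h2 : Nat.Coprime a.val (p ^ n) :=
    (((Nat.Prime.coprime_iff_not_dvd hp).mpr h1).symm).pow_right n
  have := (ZMod.isUnit_iff_coprime a.val (p ^ n)).mpr h2
  rwa [ZMod.natCast_val, ZMod.cast_id] at this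

lemma dvd_of_castHom_eq_zero (a : A)
    (h : ZMod.castHom (dvd_pow_self p hn) (ZMod p) a = 0) : (p : A) ∣ a := by
  haveI : NeZero (p ^ n) := ⟨pow_ne_zero _ hp.ne_zero⟩
  rw [ZMod.castHom_apply, ZMod.cast_eq_val, ZMod.natCast_eq_zero_iff] at h
  obtain ⟨k, hk⟩ := h
  refine ⟨(k : A), ?_⟩
  have : ((a.val : ℕ) : A) = a := by rw [ZMod.natCast_val, ZMod.cast_id]
  rw [← this, hk]
  push_cast
  ring

lemma natCast_p_dvd_of_bar_eq_zero (f : R)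
    (h : f.map (ZMod.castHom (dvd_pow_self p hn) (ZMod p)) = 0) : (p : R) ∣ f := by
  have : C ((p : A)) ∣ f := by
    rw [C_dvd_iff_dvd_coeff]
    intro i
    apply dvd_of_castHom_eq_zero hp hn
    have : (f.map (ZMod.castHom (dvd_pow_self p hn) (ZMod p))).coeff i = 0 := by
      rw [h, coeff_zero]
    rwa [coeff_map] at this
  rwa [map_natCast C p] at this

/-- Decomposition: any polynomial with nonzero reduction mod p is a unit times a monic
polynomial plus p times something. -/
lemma decomp (r : R) (hr : r.map (ZMod.castHom (dvd_pow_self p hn) (ZMod p)) ≠ 0) :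
    ∃ (a : A) (m h : R), IsUnit a ∧ m.Monic ∧ r = C a * m + (p : R) * h := by
  haveI : Fact (1 < p ^ n) := ⟨Nat.one_lt_pow hn hp.one_lt⟩
  haveI : Fact p.Prime := ⟨hp⟩
  set bar : R →+* Polynomial (ZMod p) :=
    Polynomial.mapRingHom (ZMod.castHom (dvd_pow_self p hn) (ZMod p)) with hbar
  have hr : bar r ≠ 0 := hr
  set d := (bar r).natDegree with hdd
  have ha : IsUnit (r.coeff d) := by
    apply isUnit_of_castHom_ne_zero hp hn
    have : (bar r).coeff d ≠ 0 := by
      rw [hdd]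
      exact mt leadingCoeff_eq_zero.mp hr
    rwa [hbar, coe_mapRingHom, coeff_map] at this
  obtain ⟨u, hu'⟩ := ha
  set q : R := C (↑u⁻¹ : A) * r with hq
  set m : R := q %ₘ (X ^ (d + 1)) with hm
  have hmonicX : (X ^ (d + 1) : R).Monic := monic_X_pow _
  have hmdeg : m.natDegree ≤ d := by
    have h1 : m.natDegree < (X ^ (d + 1) : R).natDegree := by
      apply natDegree_modByMonic_lt _ hmonicX
      intro h
      have := congrArg natDegree h
      rw [natDegree_X_pow, natDegree_one] at this
      omega
    rwa [natDegree_X_pow, Nat.lt_succ_iff] at h1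
  have hcoeff : m.coeff d = 1 := by
    have := modByMonic_eq_sub_mul_div q (X ^ (d + 1))
    rw [← hm] at this
    have h2 : ((X ^ (d + 1) : R) * (q /ₘ X ^ (d + 1))).coeff d = 0 := by
      rw [mul_comm, coeff_mul_X_pow']
      simp
    rw [this, coeff_sub, h2, sub_zero, hq, coeff_C_mul, ← hu', Units.inv_mul]
  have hmon : m.Monic := monic_of_natDegree_le_of_coeff_eq_one d hmdeg hcoeff
  have hbq : (bar q).degree < ((X : Polynomial (ZMod p)) ^ (d + 1)).degree := by
    rw [degree_X_pow]
    calc (bar q).degree ≤ (bar (C (↑u⁻¹ : A))).degree + (bar r).degree := by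
            rw [hq, map_mul]; exact degree_mul_le _ _
      _ ≤ 0 + (bar r).degree := by
            apply add_le_add_left
            rw [hbar, coe_mapRingHom, map_C]
            exact degree_C_le
      _ = (bar r).degree := by rw [zero_add]
      _ ≤ (d : ℕ) := degree_le_natDegree
      _ < ((d : ℕ) + 1 : ℕ) := by rw [Nat.cast_lt]; omega
  have hbarm : bar m = bar q := by
    rw [hm, hbar, coe_mapRingHom, map_modByMonic _ hmonicX]
    have hX : (X ^ (d + 1) : R).map (ZMod.castHom (dvd_pow_self p hn) (ZMod p)) = X ^ (d + 1) := by
      simp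
    rw [hX]
    rw [(modByMonic_eq_self_iff (monic_X_pow _)).mpr]
    rw [hbar, coe_mapRingHom] at hbq
    exact hbq
  have hqm : bar (q - m) = 0 := by rw [map_sub, hbarm, sub_self]
  obtain ⟨h, hh⟩ := natCast_p_dvd_of_bar_eq_zero hp hn _ hqm
  refine ⟨(↑u : A), m, C (↑u : A) * h, u.isUnit, hmon, ?_⟩
  have hr' : r = C (↑u : A) * q := by
    rw [hq, ← mul_assoc, ← map_mul, Units.mul_inv, map_one, one_mul]
  have hq' : q = m + (p : R) * h := by linear_combination hh
  rw [hr', hq']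
  ring

lemma alg_injective : Function.Injective (algebraMap R T) := by
  haveI : Fact (1 < p ^ n) := ⟨Nat.one_lt_pow hn hp.one_lt⟩
  exact IsLocalization.injective _ monic_le_nzd

lemma pi_pow_eq_zero_iff (m : ℕ) : ((p : T)) ^ m = 0 ↔ n ≤ m := by
  haveI : NeZero (p ^ n) := ⟨pow_ne_zero _ hp.ne_zero⟩
  have hpnA : ((p : A)) ^ n = 0 := by
    have : ((p ^ n : ℕ) : A) = 0 := ZMod.natCast_self _
    push_cast at this
    exact this
  constructor
  · intro h
    have h2 : algebraMap R T ((p : R) ^ m) = algebraMap R T 0 := by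
      rw [map_pow, map_natCast, map_zero, h]
    have h3 : ((p : R)) ^ m = 0 := alg_injective hp hn h2
    rw [← Polynomial.C_eq_natCast, ← map_pow, Polynomial.C_eq_zero] at h3
    have h5 : ((p ^ m : ℕ) : A) = 0 := by push_cast; exact h3
    rw [ZMod.natCast_eq_zero_iff] at h5
    exact (Nat.pow_dvd_pow_iff_le_right hp.one_lt).mp h5
  · intro h
    have hT : ((p : T)) ^ n = 0 := by
      have := congrArg (algebraMap R T) (show ((p : R)) ^ n = 0 by
        rw [← Polynomial.C_eq_natCast, ← map_pow, hpnA, map_zero])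
      rwa [map_pow, map_natCast, map_zero] at this
    calc ((p : T)) ^ m = ((p : T)) ^ n * ((p : T)) ^ (m - n) := by
          rw [← pow_add]; congr 1; omega
      _ = 0 := by rw [hT, zero_mul]

/-- every element of T is a unit or divisible by p -/
lemma isUnit_or_dvd (t : T) : IsUnit t ∨ ∃ t' : T, t = (p : T) * t' := by
  haveI : Fact (1 < p ^ n) := ⟨Nat.one_lt_pow hn hp.one_lt⟩
  obtain ⟨⟨r, s⟩, hrs⟩ := IsLocalization.surj (monicSubmonoid (ZMod (p ^ n))) t
  have hsu : IsUnit (algebraMap R T (s : R)) := IsLocalization.map_units T s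
  obtain ⟨su, hsu'⟩ := hsu
  have ht : t = algebraMap R T r * ↑su⁻¹ := by
    rw [eq_comm, Units.mul_inv_eq_iff_eq_mul, hsu']
    exact hrs.symm
  by_cases hbar : r.map (ZMod.castHom (dvd_pow_self p hn) (ZMod p)) = 0
  · right
    obtain ⟨r', hr'⟩ := natCast_p_dvd_of_bar_eq_zero hp hn r hbar
    refine ⟨algebraMap R T r' * ↑su⁻¹, ?_⟩
    rw [ht, hr', map_mul, map_natCast]
    ring
  · left
    obtain ⟨a, m, h, ha, hm, hdec⟩ := decomp hp hn r hbar
    have h1 : IsUnit (algebraMap R T (C a * m)) := by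
      rw [map_mul]
      exact (ha.map ((algebraMap R T).comp Polynomial.C)).mul
        (IsLocalization.map_units (M := monicSubmonoid (ZMod (p ^ n))) T ⟨m, hm⟩)
    have h2 : IsNilpotent (algebraMap R T ((p : R) * h)) := by
      refine ⟨n, ?_⟩
      rw [map_mul, mul_pow, map_natCast, (pi_pow_eq_zero_iff hp hn n).mpr le_rfl, zero_mul]
    have h3 : IsUnit (algebraMap R T r) := by
      rw [hdec, map_add]
      exact IsNilpotent.isUnit_add_left_of_commute h2 h1 (Commute.all _ _)
    rw [ht]
    exact h3.mul su⁻¹.isUnit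

/-- every element of T is p^j times a unit, for some j ≤ n -/
lemma exists_rep (t : T) : ∃ (j : ℕ) (u : T), j ≤ n ∧ IsUnit u ∧ t = (p : T) ^ j * u := by
  haveI : Fact (1 < p ^ n) := ⟨Nat.one_lt_pow hn hp.one_lt⟩
  set P : ℕ → Prop := fun j => ∃ w : T, t = (p : T) ^ j * w with hP
  have hP0 : P 0 := ⟨t, by rw [pow_zero, one_mul]⟩
  classical
  set j := Nat.findGreatest P n with hj
  obtain ⟨w, hw⟩ : P j := Nat.findGreatest_spec (Nat.zero_le n) hP0
  have hjn : j ≤ n := Nat.findGreatest_le n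
  rcases eq_or_lt_of_le hjn with hjeq | hjlt
  · refine ⟨n, 1, le_rfl, isUnit_one, ?_⟩
    rw [mul_one, (pi_pow_eq_zero_iff hp hn n).mpr le_rfl]
    rw [hjeq] at hw
    rw [hw, (pi_pow_eq_zero_iff hp hn n).mpr le_rfl, zero_mul]
  · refine ⟨j, w, hjn, ?_, hw⟩
    rcases isUnit_or_dvd hp hn w with hu | ⟨w', hw'⟩
    · exact hu
    · exfalso
      have : P (j + 1) := ⟨w', by rw [hw, hw', pow_succ]; ring⟩
      exact Nat.findGreatest_is_greatest (Nat.lt_succ_self j) (by omega) this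

/-- every ideal of T is generated by a power of p -/
lemma ideal_eq_span (J : Ideal T) : ∃ k ≤ n, J = Ideal.span {(p : T) ^ k} := by
  classical
  have hex : ∃ j, (p : T) ^ j ∈ J := ⟨n, by
    rw [(pi_pow_eq_zero_iff hp hn n).mpr le_rfl]; exact J.zero_mem⟩
  set k := Nat.find hex with hk
  refine ⟨k, Nat.find_le (by
    rw [(pi_pow_eq_zero_iff hp hn n).mpr le_rfl]; exact J.zero_mem), ?_⟩
  apply le_antisymm
  · intro t ht
    obtain ⟨j, u, hjn, hu, htu⟩ := exists_rep hp hn t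
    have hpj : (p : T) ^ j ∈ J := by
      have heq : (p : T) ^ j = t * ↑hu.unit⁻¹ := by
        rw [htu, mul_assoc, hu.mul_val_inv, mul_one]
      rw [heq]
      exact Ideal.mul_mem_right _ _ ht
    have hkj : k ≤ j := Nat.find_min' hex hpj
    rw [Ideal.mem_span_singleton']
    refine ⟨(p : T) ^ (j - k) * u, ?_⟩
    rw [mul_assoc, mul_comm u ((p : T) ^ k), ← mul_assoc, ← pow_add,
      show j - k + k = j by omega, htu]
  · rw [Ideal.span_le, Set.singleton_subset_iff]
    exact Nat.find_spec hex

/-- annihilator of p^(n-k) is contained in (p^k) -/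
lemma mem_span_of_ann (k : ℕ) (hk : k ≤ n) (t : T) (h : (p : T) ^ (n - k) * t = 0) :
    t ∈ Ideal.span {(p : T) ^ k} := by
  obtain ⟨j, u, hjn, hu, htu⟩ := exists_rep hp hn t
  have h2 : (p : T) ^ (n - k + j) * u = 0 := by
    rw [pow_add, mul_assoc, ← htu]
    exact h
  have h3 : (p : T) ^ (n - k + j) = 0 := by
    calc (p : T) ^ (n - k + j)
        = (p : T) ^ (n - k + j) * u * ↑hu.unit⁻¹ := by
          rw [mul_assoc, hu.mul_val_inv, mul_one]
      _ = 0 := by rw [h2, zero_mul]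
  have h4 : n ≤ n - k + j := (pi_pow_eq_zero_iff hp hn _).mp h3
  have hkj : k ≤ j := by omega
  rw [Ideal.mem_span_singleton']
  refine ⟨(p : T) ^ (j - k) * u, ?_⟩
  rw [mul_assoc, mul_comm u ((p : T) ^ k), ← mul_assoc, ← pow_add,
    show j - k + k = j by omega, htu]

lemma baer : Module.Baer R T := by
  haveI : Fact (1 < p ^ n) := ⟨Nat.one_lt_pow hn hp.one_lt⟩
  intro I f
  obtain ⟨k, hkn, hJ⟩ := ideal_eq_span hp hn (I.map (algebraMap R T))
  have hpk : (p : T) ^ k ∈ I.map (algebraMap R T) := by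
    rw [hJ]
    exact Ideal.mem_span_singleton_self _
  rw [IsLocalization.mem_map_algebraMap_iff (monicSubmonoid (ZMod (p ^ n)))] at hpk
  obtain ⟨⟨⟨x, hx⟩, s⟩, hxs⟩ := hpk
  simp only at hxs
  -- hxs : (p : T)^k * algebraMap R T ↑s = algebraMap R T x
  have hx0 : ((p : R)) ^ (n - k) * x = 0 := by
    apply alg_injective hp hn
    rw [map_mul, map_pow, map_natCast, map_zero, ← hxs, ← mul_assoc, ← pow_add,
      show n - k + k = n by omega, (pi_pow_eq_zero_iff hp hn n).mpr le_rfl, zero_mul]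
  have hfx : (p : T) ^ (n - k) * f ⟨x, hx⟩ = 0 := by
    have h1 : ((p : R) ^ (n - k)) • (⟨x, hx⟩ : I) = 0 := by
      apply Subtype.ext
      simpa [smul_eq_mul] using hx0
    calc (p : T) ^ (n - k) * f ⟨x, hx⟩
        = ((p : R) ^ (n - k)) • f ⟨x, hx⟩ := by
          rw [Algebra.smul_def, map_pow, map_natCast]
      _ = f (((p : R) ^ (n - k)) • ⟨x, hx⟩) := (f.map_smul _ _).symm
      _ = 0 := by rw [h1, map_zero]
  obtain ⟨c₀, hc₀⟩ := Ideal.mem_span_singleton'.mp (mem_span_of_ann hp hn k hkn _ hfx)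
  -- hc₀ : c₀ * (p:T)^k = f ⟨x, hx⟩
  have hsu : IsUnit (algebraMap R T (s : Polynomial (ZMod (p ^ n)))) :=
    IsLocalization.map_units T s
  refine ⟨LinearMap.toSpanSingleton _ _ (c₀ * ↑hsu.unit⁻¹), ?_⟩
  intro x' hx'
  rw [LinearMap.toSpanSingleton_apply, Algebra.smul_def]
  have hax' : algebraMap R T x' ∈ I.map (algebraMap R T) := Ideal.mem_map_of_mem _ hx'
  rw [hJ, Ideal.mem_span_singleton'] at hax'
  obtain ⟨w, hw⟩ := hax'
  -- hw : w * (p:T)^k = algebraMap R T x'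
  obtain ⟨⟨r₁, s₁⟩, hr₁⟩ := IsLocalization.surj (monicSubmonoid (ZMod (p ^ n))) w
  simp only at hr₁
  -- hr₁ : w * algebraMap R T ↑s₁ = algebraMap R T r₁
  have key : x' * (↑s₁ * ↑s) = x * r₁ := by
    apply alg_injective hp hn
    simp only [map_mul]
    calc algebraMap R T x' * (algebraMap R T ↑s₁ * algebraMap R T ↑s)
        = (w * algebraMap R T ↑s₁) * ((p : T) ^ k * algebraMap R T ↑s) := by
          rw [← hw]; ring
      _ = algebraMap R T r₁ * algebraMap R T x := by rw [hr₁, hxs]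
      _ = algebraMap R T x * algebraMap R T r₁ := by ring
  have hfeq : algebraMap R T (↑s₁ * ↑s) * f ⟨x', hx'⟩ = algebraMap R T r₁ * f ⟨x, hx⟩ := by
    have h1 : ((↑s₁ * ↑s : Polynomial (ZMod (p ^ n)))) • (⟨x', hx'⟩ : I)
        = (r₁ : Polynomial (ZMod (p ^ n))) • (⟨x, hx⟩ : I) := by
      apply Subtype.ext
      simp only [SetLike.val_smul, smul_eq_mul]
      calc (↑s₁ * ↑s : Polynomial (ZMod (p ^ n))) * x' = x' * (↑s₁ * ↑s) := by ring
        _ = x * r₁ := key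
        _ = r₁ * x := by ring
    calc algebraMap R T (↑s₁ * ↑s) * f ⟨x', hx'⟩
        = ((↑s₁ * ↑s : Polynomial (ZMod (p ^ n)))) • f ⟨x', hx'⟩ := (Algebra.smul_def _ _).symm
      _ = f (((↑s₁ * ↑s : Polynomial (ZMod (p ^ n)))) • ⟨x', hx'⟩) := (f.map_smul _ _).symm
      _ = f ((r₁ : Polynomial (ZMod (p ^ n))) • ⟨x, hx⟩) := by rw [h1]
      _ = (r₁ : Polynomial (ZMod (p ^ n))) • f ⟨x, hx⟩ := f.map_smul _ _
      _ = algebraMap R T r₁ * f ⟨x, hx⟩ := Algebra.smul_def _ _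
  have hunit : IsUnit (algebraMap R T ((↑s₁ * ↑s : Polynomial (ZMod (p ^ n))))) := by
    have := IsLocalization.map_units T (s₁ * s)
    rwa [Submonoid.coe_mul] at this
  have hs_cancel : algebraMap R T (↑s : Polynomial (ZMod (p ^ n))) * ↑hsu.unit⁻¹ = 1 :=
    hsu.mul_val_inv
  apply hunit.mul_left_cancel
  calc algebraMap R T (↑s₁ * ↑s) * (algebraMap R T x' * (c₀ * ↑hsu.unit⁻¹))
      = (algebraMap R T x' * algebraMap R T ↑s₁) * c₀
          * (algebraMap R T ↑s * ↑hsu.unit⁻¹) := by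
        rw [map_mul]; ring
    _ = (w * algebraMap R T ↑s₁) * ((p : T) ^ k * c₀) := by
        rw [hs_cancel, mul_one, ← hw]; ring
    _ = algebraMap R T r₁ * (c₀ * (p : T) ^ k) := by rw [hr₁]; ring
    _ = algebraMap R T r₁ * f ⟨x, hx⟩ := by rw [hc₀]
    _ = algebraMap R T (↑s₁ * ↑s) * f ⟨x', hx'⟩ := hfeq.symm

end Stmt13Aux

/-- For `R = (ℤ/pⁿℤ)[X]` and `S` the multiplicative set of monic polynomials, the
localization `S⁻¹R` is an injective `R`-module, and the localization map `R → S⁻¹R`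
is injective. -/
theorem stmt_13 (p n : ℕ) (hp : p.Prime) (hn : 1 ≤ n) :
    Module.Injective (Polynomial (ZMod (p ^ n)))
      (Localization (monicSubmonoid (ZMod (p ^ n)))) ∧
    Function.Injective
      (algebraMap (Polynomial (ZMod (p ^ n)))
        (Localization (monicSubmonoid (ZMod (p ^ n))))) := by
  have hn' : n ≠ 0 := Nat.one_le_iff_ne_zero.mp hn
  exact ⟨(Stmt13Aux.baer hp hn').injective, Stmt13Aux.alg_injective hp hn'⟩
end

section
/- Let $p$ be a prime, $n \geq 1$ an integer, $R = (\mathbf{Z}/p^n\mathbf{Z})[X]$, and let $S \subseteq R$ be the multiplicative set of monic polynomials. Then $S^{-1}R$ is the total ring of fractions of $R$: every monic polynomial is a nonzerodivisor in $R$, and the canonical $R$-algebra map from $S^{-1}R$ to the localization of $R$ at the multiplicative set of all nonzerodivisors is an isomorphism (equivalently, every nonzerodivisor of $R$ becomes a unit in $S^{-1}R$). -/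
open Polynomial

section Aux

variable {A B : Type*} [CommRing A] [CommRing B]

/-- Two polynomials whose coefficients all lie in a "square-zero kernel" multiply to zero. -/
lemma mul_eq_zero_of_coeff_ker (π : A →+* B)
    (hker : ∀ x y : A, π x = 0 → π y = 0 → x * y = 0)
    (a b : A[X]) (ha : ∀ i, π (a.coeff i) = 0) (hb : ∀ i, π (b.coeff i) = 0) :
    a * b = 0 := by
  ext k
  rw [coeff_mul, coeff_zero]
  exact Finset.sum_eq_zero fun x _ => hker _ _ (ha _) (hb _)

/-- If `t` maps to a monic polynomial modulo a square-zero kernel, then `t` has a monic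
multiple. -/
lemma exists_monic_mul_of_map_monic (π : A →+* B)
    (hker : ∀ x y : A, π x = 0 → π y = 0 → x * y = 0)
    (t : A[X]) (ht : (t.map π).Monic) : ∃ g : A[X], (t * g).Monic := by
  rcases subsingleton_or_nontrivial A with hA | hA
  · exact ⟨1, Subsingleton.elim _ _⟩
  set d := (t.map π).natDegree with hd
  have hπd : π (t.coeff d) = 1 := by
    have h1 := ht
    rw [Monic, leadingCoeff, ← hd, coeff_map] at h1
    exact h1
  set u := t.coeff d with hu
  have hj : (u - 1) * (u - 1) = 0 :=
    hker _ _ (by rw [map_sub, hπd, map_one, sub_self]) (by rw [map_sub, hπd, map_one, sub_self])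
  set t₁ := C (2 - u) * t with ht₁
  have ht₁d : t₁.coeff d = 1 := by
    rw [ht₁, coeff_C_mul, ← hu]
    linear_combination (-1 : A) * hj
  have hπ2u : π (2 - u) = 1 := by
    have h2 : π 2 = 2 := by
      rw [show (2 : A) = 1 + 1 by norm_num, map_add, map_one]
      norm_num
    rw [map_sub, hπd, h2]
    norm_num
  have ht₁map : t₁.map π = t.map π := by
    rw [ht₁, Polynomial.map_mul, map_C, hπ2u, map_one, one_mul]
  have ht₁high : ∀ i, d < i → π (t₁.coeff i) = 0 := by
    intro i hi
    have h2 : (t₁.map π).coeff i = 0 := by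
      rw [ht₁map]; exact coeff_eq_zero_of_natDegree_lt hi
    rwa [coeff_map] at h2
  set m : A[X] := ∑ i ∈ Finset.range (d + 1), C (t₁.coeff i) * X ^ i with hm
  have hmc : ∀ k, m.coeff k = if k ≤ d then t₁.coeff k else 0 := by
    intro k
    rw [hm, finset_sum_coeff]
    simp only [coeff_C_mul, coeff_X_pow, mul_ite, mul_one, mul_zero]
    rw [Finset.sum_ite_eq (Finset.range (d + 1)) k (fun i => t₁.coeff i)]
    simp [Nat.lt_succ_iff]
  have hmdeg : m.natDegree ≤ d := by
    refine natDegree_le_iff_coeff_eq_zero.2 fun N hN => ?_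
    rw [hmc]
    simp [Nat.not_le.2 hN]
  have hmonic : m.Monic := by
    refine monic_of_natDegree_le_of_coeff_eq_one d hmdeg ?_
    rw [hmc]; simp [ht₁d]
  set ε := t₁ - m with hε
  have hεker : ∀ i, π (ε.coeff i) = 0 := by
    intro i
    rcases le_or_gt i d with h | h
    · rw [hε, coeff_sub, hmc]
      simp [h]
    · rw [hε, coeff_sub, hmc]
      simp only [Nat.not_le.2 h, if_false, sub_zero]
      exact ht₁high i h
  set q := ε /ₘ m with hq
  set r := ε %ₘ m with hr
  have hqker : ∀ i, π (q.coeff i) = 0 := by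
    have h3 : q.map π = 0 := by
      rw [hq, map_divByMonic π hmonic]
      have : ε.map π = 0 := by
        ext i; rw [coeff_map, hεker, coeff_zero]
      rw [this, zero_divByMonic]
    intro i
    have := congrArg (fun f => f.coeff i) h3
    simpa [coeff_map] using this
  have hrker : ∀ i, π (r.coeff i) = 0 := by
    have h3 : r.map π = 0 := by
      rw [hr, map_modByMonic π hmonic]
      have : ε.map π = 0 := by
        ext i; rw [coeff_map, hεker, coeff_zero]
      rw [this, zero_modByMonic]
    intro i
    have := congrArg (fun f => f.coeff i) h3
    simpa [coeff_map] using this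
  have hqq : q * q = 0 := mul_eq_zero_of_coeff_ker π hker q q hqker hqker
  have hrq : r * q = 0 := mul_eq_zero_of_coeff_ker π hker r q hrker hqker
  have hεeq : r + m * q = ε := modByMonic_add_div ε m
  refine ⟨C (2 - u) * (1 - q), ?_⟩
  have hkey : t * (C (2 - u) * (1 - q)) = m + r := by
    have h4 : t₁ * (1 - q) = m + r := by
      have h5 : t₁ = m + (r + m * q) := by rw [hεeq, hε]; ring
      rw [h5]
      linear_combination (-(m : A[X])) * hqq - hrq
    calc t * (C (2 - u) * (1 - q)) = t₁ * (1 - q) := by rw [ht₁]; ring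
      _ = m + r := h4
  rw [hkey]
  exact hmonic.add_of_left (degree_modByMonic_lt ε hmonic)

end Aux

section ZModAux

lemma zmod_castHom_ker_sq (a b : ℕ) [NeZero b] (hab : a ∣ b) (hba : b ∣ a * a)
    (x y : ZMod b) (hx : ZMod.castHom hab (ZMod a) x = 0)
    (hy : ZMod.castHom hab (ZMod a) y = 0) : x * y = 0 := by
  have hx' : a ∣ x.val := by
    rw [← ZMod.natCast_eq_zero_iff]
    rw [ZMod.natCast_val, ← ZMod.castHom_apply (h := hab)]
    exact hx
  have hy' : a ∣ y.val := by
    rw [← ZMod.natCast_eq_zero_iff]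
    rw [ZMod.natCast_val, ← ZMod.castHom_apply (h := hab)]
    exact hy
  have hxy : x * y = ((x.val * y.val : ℕ) : ZMod b) := by
    rw [Nat.cast_mul, ZMod.natCast_val, ZMod.natCast_val, ZMod.cast_id, ZMod.cast_id]
  rw [hxy, ZMod.natCast_eq_zero_iff]
  exact dvd_trans hba (mul_dvd_mul hx' hy')

lemma zmod_castHom_surjective (a b : ℕ) [NeZero a] (hab : a ∣ b) :
    Function.Surjective (ZMod.castHom hab (ZMod a)) := by
  intro y
  refine ⟨((y.val : ℕ) : ZMod b), ?_⟩
  rw [map_natCast, ZMod.natCast_val, ZMod.cast_id]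

end ZModAux

/-- Key lemma: over `ZMod (p^(k+1))`, any polynomial whose reduction mod `p` is nonzero
has a monic multiple. -/
lemma exists_monic_mul_zmod (p : ℕ) (hp : p.Prime) : ∀ k : ℕ,
    ∀ f : Polynomial (ZMod (p ^ (k + 1))),
      f.map (ZMod.castHom (dvd_pow_self p (Nat.succ_ne_zero k)) (ZMod p)) ≠ 0 →
      ∃ g, (f * g).Monic := by
  haveI : Fact p.Prime := ⟨hp⟩
  intro k
  induction k with
  | zero =>
    intro f hf
    set π := ZMod.castHom (dvd_pow_self p (Nat.succ_ne_zero 0)) (ZMod p) with hπ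
    haveI : NeZero (p ^ 1) := ⟨pow_ne_zero _ hp.pos.ne'⟩
    have hker : ∀ x y : ZMod (p ^ 1), π x = 0 → π y = 0 → x * y = 0 := by
      intro x y hx hy
      exact zmod_castHom_ker_sq p (p ^ 1) (dvd_pow_self p (Nat.succ_ne_zero 0))
        (by rw [pow_one]; exact dvd_mul_right p p) x y hx hy
    obtain ⟨g, hg⟩ := Polynomial.map_surjective π
      (zmod_castHom_surjective p (p ^ 1) (dvd_pow_self p (Nat.succ_ne_zero 0)))
      (C (f.map π).leadingCoeff⁻¹)
    have hmon : ((f * g).map π).Monic := by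
      rw [Polynomial.map_mul, hg]
      exact monic_mul_leadingCoeff_inv hf
    obtain ⟨g₂, hg₂⟩ := exists_monic_mul_of_map_monic π hker (f * g) hmon
    exact ⟨g * g₂, by rwa [← mul_assoc]⟩
  | succ k ih =>
    intro f hf
    set π := ZMod.castHom (pow_dvd_pow p (Nat.le_succ (k + 1))) (ZMod (p ^ (k + 1))) with hπ
    haveI : NeZero (p ^ (k + 1)) := ⟨pow_ne_zero _ hp.pos.ne'⟩
    haveI : NeZero (p ^ (k + 2)) := ⟨pow_ne_zero _ hp.pos.ne'⟩
    have hker : ∀ x y : ZMod (p ^ (k + 2)), π x = 0 → π y = 0 → x * y = 0 := by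
      intro x y hx hy
      exact zmod_castHom_ker_sq (p ^ (k + 1)) (p ^ (k + 2))
        (pow_dvd_pow p (Nat.le_succ (k + 1)))
        (by rw [← pow_add]; exact pow_dvd_pow p (by omega)) x y hx hy
    have hf' : (f.map π).map
        (ZMod.castHom (dvd_pow_self p (Nat.succ_ne_zero k)) (ZMod p)) ≠ 0 := by
      rw [Polynomial.map_map, hπ, ZMod.castHom_comp]
      exact hf
    obtain ⟨g', hg'⟩ := ih (f.map π) hf'
    obtain ⟨g, hgeq⟩ := Polynomial.map_surjective π
      (zmod_castHom_surjective (p ^ (k + 1)) (p ^ (k + 2))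
        (pow_dvd_pow p (Nat.le_succ (k + 1)))) g'
    have hmon : ((f * g).map π).Monic := by
      rw [Polynomial.map_mul, hgeq]
      exact hg'
    obtain ⟨g₂, hg₂⟩ := exists_monic_mul_of_map_monic π hker (f * g) hmon
    exact ⟨g * g₂, by rwa [← mul_assoc]⟩

/-- A nonzerodivisor in `ZMod (p^n)[X]` has nonzero reduction mod `p`. -/
lemma zmod_map_ne_zero_of_mem_nonZeroDivisors (p n : ℕ) (hp : p.Prime) (hn : 1 ≤ n)
    (f : Polynomial (ZMod (p ^ n)))
    (hf : f ∈ nonZeroDivisors (Polynomial (ZMod (p ^ n)))) :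
    f.map (ZMod.castHom (dvd_pow_self p (by omega : n ≠ 0)) (ZMod p)) ≠ 0 := by
  intro h0
  haveI : NeZero (p ^ n) := ⟨pow_ne_zero _ hp.pos.ne'⟩
  have hcoef : ∀ i, ((p : ZMod (p ^ n))) ^ (n - 1) * f.coeff i = 0 := by
    intro i
    have hci : ZMod.castHom (dvd_pow_self p (by omega : n ≠ 0)) (ZMod p) (f.coeff i) = 0 := by
      have := congrArg (fun q => q.coeff i) h0
      simpa [coeff_map] using this
    have hpdvd : p ∣ (f.coeff i).val := by
      rw [← ZMod.natCast_eq_zero_iff]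
      rw [ZMod.natCast_val, ← ZMod.castHom_apply (h := dvd_pow_self p (by omega : n ≠ 0))]
      exact hci
    have hval : f.coeff i = (((f.coeff i).val : ℕ) : ZMod (p ^ n)) := by
      rw [ZMod.natCast_val, ZMod.cast_id]
    rw [hval, show ((p : ZMod (p ^ n))) ^ (n - 1) = ((p ^ (n - 1) : ℕ) : ZMod (p ^ n)) by
      push_cast; ring, ← Nat.cast_mul, ZMod.natCast_eq_zero_iff]
    calc p ^ n = p ^ (n - 1) * p := by rw [← pow_succ]; congr 1; omega
      _ ∣ p ^ (n - 1) * (f.coeff i).val := mul_dvd_mul_left _ hpdvd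
  have hCf : (C (((p : ZMod (p ^ n))) ^ (n - 1))) * f = 0 := by
    ext i
    rw [coeff_C_mul, hcoef, coeff_zero]
  have hC0 : (C (((p : ZMod (p ^ n))) ^ (n - 1))) = 0 := hf.2 _ hCf
  have hpn : ((p : ZMod (p ^ n))) ^ (n - 1) = 0 := by
    rwa [C_eq_zero] at hC0
  rw [show ((p : ZMod (p ^ n))) ^ (n - 1) = ((p ^ (n - 1) : ℕ) : ZMod (p ^ n)) by
    push_cast; ring, ZMod.natCast_eq_zero_iff] at hpn
  have hle : p ^ n ≤ p ^ (n - 1) := Nat.le_of_dvd (pow_pos hp.pos _) hpn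
  have hlt : p ^ (n - 1) < p ^ n := Nat.pow_lt_pow_right hp.one_lt (by omega)
  omega

/-- For `R = (ℤ/pⁿℤ)[X]` and `S` the monic polynomials: every monic polynomial is a
nonzerodivisor in `R`, and `S⁻¹R` is the total ring of fractions of `R`, i.e. `S⁻¹R`
is the localization of `R` at the multiplicative set of all nonzerodivisors
(equivalently, every nonzerodivisor of `R` becomes a unit in `S⁻¹R`). -/
theorem stmt_14 (p n : ℕ) (hp : p.Prime) (hn : 1 ≤ n) :
    (∀ g : Polynomial (ZMod (p ^ n)),
      g.Monic → g ∈ nonZeroDivisors (Polynomial (ZMod (p ^ n)))) ∧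
    IsFractionRing (Polynomial (ZMod (p ^ n)))
      (Localization (monicSubmonoid (ZMod (p ^ n)))) := by
  refine ⟨fun g hg => hg.mem_nonZeroDivisors, ?_⟩
  have key : ∀ f ∈ nonZeroDivisors (Polynomial (ZMod (p ^ n))),
      ∃ h ∈ monicSubmonoid (ZMod (p ^ n)), f ∣ h := by
    intro f hf
    have hfne := zmod_map_ne_zero_of_mem_nonZeroDivisors p n hp hn f hf
    obtain ⟨m, rfl⟩ : ∃ m, n = m + 1 := ⟨n - 1, by omega⟩
    obtain ⟨g, hg⟩ := exists_monic_mul_zmod p hp m f hfne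
    exact ⟨f * g, hg, dvd_mul_right f g⟩
  exact IsLocalization.of_le_of_exists_dvd (monicSubmonoid (ZMod (p ^ n)))
    (nonZeroDivisors _) (fun f hf => Polynomial.Monic.mem_nonZeroDivisors hf) key
end
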